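/- Let H be a complex Hilbert space, let q > p ≥ 1, and let x, y : Fin p × ℤ → H be families such that: (i) there is B₁ > 0 with ∑_{(k,n)} |⟨f, x_{(k,n)}⟩|² ≤ B₁‖f‖² for every f ∈ H; (ii) there is B₂ > 0 with ∑_{(k,n)} |⟨f, y_{(k,n)}⟩|² ≤ B₂‖f‖² for every f ∈ H; and (iii) for every f ∈ H the family ((k,n) ↦ ⟨f, y_{(k,n)}⟩ x_{(k,n)}) has sum f. Let M be a q×p complex matrix and N a p×q complex matrix with N·M = I_p, and define z_{(j,n)} = ∑_{k=0}^{p−1} M_{j,k} x_{(k,n)} and z̃_{(j,n)} = ∑_{k=0}^{p−1} conj(N_{k,j}) y_{(k,n)}. Then for every f ∈ H the family ((j,n) ↦ ⟨f, z̃_{(j,n)}⟩ z_{(j,n)}) over Fin q × ℤ has sum f (unconditional convergence in H). -/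

import Mathlib

noncomputable section
open scoped Classical

local notation "⟪" f ", " g "⟫" => @inner ℂ _ _ g f

/-- A family `x : ι → H` is a Riesz basis for `H` if it is the image of a Hilbert
(orthonormal) basis of `H` under a continuous linear equivalence of `H`. -/
def IsRieszBasis {H : Type*} [NormedAddCommGroup H] [InnerProductSpace ℂ H]
    {ι : Type*} (x : ι → H) : Prop :=
  ∃ (e : HilbertBasis ι ℂ H) (T : H ≃L[ℂ] H), ∀ i, x i = T (e i)

/-- Families `x, y : ι → H` form a pair of dual Riesz bases: both are Riesz bases,
they are biorthogonal, and `∑ᵢ ⟨f, yᵢ⟩ xᵢ = f` for every `f` (inner product linear in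
the first argument, conjugate-linear in the second). -/
def IsDualRieszBasisPair {H : Type*} [NormedAddCommGroup H] [InnerProductSpace ℂ H]
    {ι : Type*} (x y : ι → H) : Prop :=
  IsRieszBasis x ∧ IsRieszBasis y ∧
    (∀ i j, ⟪x i, y j⟫ = if i = j then (1 : ℂ) else 0) ∧
    ∀ f : H, HasSum (fun i => ⟪f, y i⟫ • x i) f


/-- Combine fiberwise sums over a product with finite first factor. -/
lemma hasSum_of_fibers {J α H : Type*} [Fintype J] [AddCommMonoid H] [TopologicalSpace H]
    [ContinuousAdd H] (g : J × α → H) (t : J → H)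
    (h : ∀ j, HasSum (fun n => g (j, n)) (t j)) :
    HasSum g (∑ j, t j) := by
  classical
  have h1 : ∀ j : J, HasSum (fun pr : J × α => if pr.1 = j then g pr else 0) (t j) := by
    intro j
    have hinj : Function.Injective (fun n : α => ((j, n) : J × α)) := by
      intro a b hab; simpa using hab
    rw [← Function.Injective.hasSum_iff hinj]
    · have : ((fun pr : J × α => if pr.1 = j then g pr else 0) ∘ fun n => (j, n)) =
          fun n => g (j, n) := by
        funext n; simp
      rw [this]; exact h j
    · intro pr hpr
      have : pr.1 ≠ j := by
        intro hh
        exact hpr ⟨pr.2, by simp [← hh]⟩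
      simp [this]
  have h2 := hasSum_sum (s := (Finset.univ : Finset J))
    (f := fun j (pr : J × α) => if pr.1 = j then g pr else 0) (a := t)
    (fun j _ => h1 j)
  convert h2 using 1
  funext pr
  simp

/-- Synthesis: Bessel family + ℓ² coefficients gives a summable series. -/
lemma bessel_synthesis {ι H : Type*} [NormedAddCommGroup H] [InnerProductSpace ℂ H]
    [CompleteSpace H] (v : ι → H) (B : ℝ) (hB : 0 ≤ B)
    (hv : ∀ g : H, Summable (fun i => ‖(inner ℂ (v i) g : ℂ)‖ ^ 2) ∧
      ∑' i, ‖(inner ℂ (v i) g : ℂ)‖ ^ 2 ≤ B * ‖g‖ ^ 2)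
    (c : ι → ℂ) (hc : Summable fun i => ‖c i‖ ^ 2) :
    Summable (fun i => c i • v i) := by
  have key : ∀ s : Finset ι, ‖∑ i ∈ s, c i • v i‖ ≤
      Real.sqrt B * Real.sqrt (∑ i ∈ s, ‖c i‖ ^ 2) := by
    intro s
    set S := ∑ i ∈ s, c i • v i with hS
    have h1 : (inner ℂ S S : ℂ) = ∑ i ∈ s, c i * inner ℂ S (v i) := by
      rw [hS, inner_sum]
      simp [inner_smul_right, sum_inner, inner_smul_left, mul_comm]
    have h2 : ‖S‖ ^ 2 = ‖(inner ℂ S S : ℂ)‖ := by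
      rw [@inner_self_eq_norm_sq_to_K ℂ]
      rw [norm_pow]
      simp
    have h3 : ‖S‖ ^ 2 ≤ ∑ i ∈ s, ‖c i‖ * ‖(inner ℂ (v i) S : ℂ)‖ := by
      rw [h2, h1]
      refine (norm_sum_le _ _).trans ?_
      refine Finset.sum_le_sum fun i _ => ?_
      rw [norm_mul, ← inner_conj_symm (v i) S, RCLike.norm_conj]
    have hcs : ∑ i ∈ s, ‖c i‖ * ‖(inner ℂ (v i) S : ℂ)‖ ≤
        Real.sqrt (∑ i ∈ s, ‖c i‖ ^ 2) * Real.sqrt (∑ i ∈ s, ‖(inner ℂ (v i) S : ℂ)‖ ^ 2) := by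
      have := Finset.sum_mul_sq_le_sq_mul_sq s (fun i => ‖c i‖) (fun i => ‖(inner ℂ (v i) S : ℂ)‖)
      have hnn : (0 : ℝ) ≤ ∑ i ∈ s, ‖c i‖ * ‖(inner ℂ (v i) S : ℂ)‖ :=
        Finset.sum_nonneg fun i _ => mul_nonneg (norm_nonneg _) (norm_nonneg _)
      have := Real.sqrt_le_sqrt this
      rwa [Real.sqrt_sq hnn, Real.sqrt_mul (Finset.sum_nonneg fun i _ => sq_nonneg _)] at this
    have hbnd : ∑ i ∈ s, ‖(inner ℂ (v i) S : ℂ)‖ ^ 2 ≤ B * ‖S‖ ^ 2 :=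
      le_trans (Summable.sum_le_tsum s (fun i _ => sq_nonneg _) (hv S).1) (hv S).2
    have h4 : Real.sqrt (∑ i ∈ s, ‖(inner ℂ (v i) S : ℂ)‖ ^ 2) ≤ Real.sqrt B * ‖S‖ := by
      refine le_trans (Real.sqrt_le_sqrt hbnd) ?_
      rw [Real.sqrt_mul hB, Real.sqrt_sq (norm_nonneg _)]
    have h5 : ‖S‖ ^ 2 ≤ Real.sqrt (∑ i ∈ s, ‖c i‖ ^ 2) * (Real.sqrt B * ‖S‖) := by
      refine h3.trans (hcs.trans ?_)
      exact mul_le_mul_of_nonneg_left h4 (Real.sqrt_nonneg _)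
    rcases eq_or_lt_of_le (norm_nonneg S) with h0 | h0
    · rw [← h0]
      positivity
    · nlinarith [h5, h0]
  rw [summable_iff_vanishing_norm]
  intro ε hε
  have hε' : (0:ℝ) < (ε / (Real.sqrt B + 1)) ^ 2 := by positivity
  obtain ⟨s, hs⟩ := summable_iff_vanishing_norm.mp hc _ hε'
  refine ⟨s, fun t ht => ?_⟩
  have h1 : ∑ i ∈ t, ‖c i‖ ^ 2 < (ε / (Real.sqrt B + 1)) ^ 2 := by
    have := hs t ht
    have hnn : (0:ℝ) ≤ ∑ i ∈ t, ‖c i‖ ^ 2 := Finset.sum_nonneg fun i _ => sq_nonneg _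
    rwa [Real.norm_of_nonneg hnn] at this
  have h2 : Real.sqrt (∑ i ∈ t, ‖c i‖ ^ 2) < ε / (Real.sqrt B + 1) := by
    have := Real.sqrt_lt_sqrt (Finset.sum_nonneg fun i _ => sq_nonneg _) h1
    rwa [Real.sqrt_sq (by positivity)] at this
  refine lt_of_le_of_lt (key t) ?_
  calc Real.sqrt B * Real.sqrt (∑ i ∈ t, ‖c i‖ ^ 2)
      ≤ Real.sqrt B * (ε / (Real.sqrt B + 1)) :=
        mul_le_mul_of_nonneg_left h2.le (Real.sqrt_nonneg _)
    _ < (Real.sqrt B + 1) * (ε / (Real.sqrt B + 1)) :=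
        mul_lt_mul_of_pos_right (by linarith [Real.sqrt_nonneg B]) (by positivity)
    _ = ε := by field_simp

theorem stmt6 {H : Type*} [NormedAddCommGroup H] [InnerProductSpace ℂ H]
    [CompleteSpace H]
    {p q : ℕ} (hp : 1 ≤ p) (hpq : p < q) (x y : Fin p × ℤ → H)
    (B₁ : ℝ) (hB₁ : 0 < B₁)
    (hxBessel : ∀ f : H, Summable (fun i : Fin p × ℤ => ‖⟪f, x i⟫‖ ^ 2) ∧
      ∑' i : Fin p × ℤ, ‖⟪f, x i⟫‖ ^ 2 ≤ B₁ * ‖f‖ ^ 2)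
    (B₂ : ℝ) (hB₂ : 0 < B₂)
    (hyBessel : ∀ f : H, Summable (fun i : Fin p × ℤ => ‖⟪f, y i⟫‖ ^ 2) ∧
      ∑' i : Fin p × ℤ, ‖⟪f, y i⟫‖ ^ 2 ≤ B₂ * ‖f‖ ^ 2)
    (hrec : ∀ f : H, HasSum (fun i : Fin p × ℤ => ⟪f, y i⟫ • x i) f)
    (M : Matrix (Fin q) (Fin p) ℂ) (N : Matrix (Fin p) (Fin q) ℂ)
    (hNM : N * M = 1)
    (z zt : Fin q × ℤ → H)
    (hz : ∀ j n, z (j, n) = ∑ k, M j k • x (k, n))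
    (hzt : ∀ j n, zt (j, n) = ∑ k, (starRingEnd ℂ) (N k j) • y (k, n)) :
    ∀ f : H, HasSum (fun jn : Fin q × ℤ => ⟪f, zt jn⟫ • z jn) f := by
  intro f
  classical
  set b : Fin p × ℤ → ℂ := fun kn => ⟪f, y kn⟫ with hb
  have hbl2 : ∀ k : Fin p, Summable (fun n : ℤ => ‖b (k, n)‖ ^ 2) := by
    intro k
    have hinj : Function.Injective (fun n : ℤ => ((k, n) : Fin p × ℤ)) := by
      intro a b hab; simpa using hab
    exact (hyBessel f).1.comp_injective hinj
  have hxfib : ∀ l : Fin p, ∀ g : H,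
      Summable (fun n : ℤ => ‖(inner ℂ (x (l, n)) g : ℂ)‖ ^ 2) ∧
      ∑' n : ℤ, ‖(inner ℂ (x (l, n)) g : ℂ)‖ ^ 2 ≤ B₁ * ‖g‖ ^ 2 := by
    intro l g
    have hinj : Function.Injective (fun n : ℤ => ((l, n) : Fin p × ℤ)) := by
      intro a b hab; simpa using hab
    refine ⟨(hxBessel g).1.comp_injective hinj, ?_⟩
    refine le_trans ?_ (hxBessel g).2
    exact tsum_comp_le_tsum_of_inj (hxBessel g).1 (fun i => sq_nonneg _) hinj
  have hcross : ∀ k l : Fin p, Summable (fun n : ℤ => b (k, n) • x (l, n)) :=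
    fun k l => bessel_synthesis (fun n => x (l, n)) B₁ hB₁.le (hxfib l)
      (fun n => b (k, n)) (hbl2 k)
  set u : Fin p → Fin p → H := fun k l => ∑' n : ℤ, b (k, n) • x (l, n) with hu'
  have hu : ∀ k l, HasSum (fun n : ℤ => b (k, n) • x (l, n)) (u k l) :=
    fun k l => (hcross k l).hasSum
  have hf : ∑ k, u k k = f := by
    have h1 : HasSum (fun kn : Fin p × ℤ => b kn • x kn) (∑ k, u k k) :=
      hasSum_of_fibers _ _ (fun k => hu k k)
    exact h1.unique (hrec f)
  have hcoef : ∀ (j : Fin q) (n : ℤ), ⟪f, zt (j, n)⟫ = ∑ k, N k j * b (k, n) := by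
    intro j n
    rw [hzt, sum_inner]
    refine Finset.sum_congr rfl fun k _ => ?_
    rw [inner_smul_left]
    simp [hb]
  have hterm : ∀ (j : Fin q) (n : ℤ), ⟪f, zt (j, n)⟫ • z (j, n)
      = ∑ k, ∑ l, (N k j * M j l) • (b (k, n) • x (l, n)) := by
    intro j n
    rw [hcoef, hz, Finset.sum_smul]
    refine Finset.sum_congr rfl fun k _ => ?_
    rw [Finset.smul_sum]
    refine Finset.sum_congr rfl fun l _ => ?_
    rw [smul_smul, smul_smul]
    congr 1
    ring
  have hfib : ∀ j : Fin q, HasSum (fun n : ℤ => ⟪f, zt (j, n)⟫ • z (j, n))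
      (∑ k, ∑ l, (N k j * M j l) • u k l) := by
    intro j
    have h1 : HasSum (fun n : ℤ => ∑ k, ∑ l, (N k j * M j l) • (b (k, n) • x (l, n)))
        (∑ k, ∑ l, (N k j * M j l) • u k l) :=
      hasSum_sum fun k _ => hasSum_sum fun l _ => (hu k l).const_smul _
    have h2 : (fun n : ℤ => ⟪f, zt (j, n)⟫ • z (j, n)) =
        fun n : ℤ => ∑ k, ∑ l, (N k j * M j l) • (b (k, n) • x (l, n)) := by
      funext n; exact hterm j n
    rw [h2]; exact h1
  have htot : HasSum (fun jn : Fin q × ℤ => ⟪f, zt jn⟫ • z jn)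
      (∑ j, ∑ k, ∑ l, (N k j * M j l) • u k l) :=
    hasSum_of_fibers _ _ hfib
  have halg : ∑ j, ∑ k, ∑ l, (N k j * M j l) • u k l = f := by
    rw [Finset.sum_comm]
    have hk : ∀ k : Fin p, ∑ j, ∑ l, (N k j * M j l) • u k l = u k k := by
      intro k
      rw [Finset.sum_comm]
      have hl : ∀ l, ∑ j, (N k j * M j l) • u k l = ((N * M) k l) • u k l := by
        intro l
        rw [Matrix.mul_apply, Finset.sum_smul]
      rw [Finset.sum_congr rfl (fun l _ => hl l), hNM]
      simp [Matrix.one_apply, ite_smul]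
    rw [Finset.sum_congr rfl (fun k _ => hk k)]
    exact hf
  exact halg ▸ htot
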